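/- Let A_ρ ⊆ M_n(ℂ) be a structural matrix algebra such that every central class of A_ρ has at least 2 elements, and let φ : A_ρ → M_n(ℂ) be an injective map satisfying φ(XY) = φ(X)φ(Y) for all X, Y ∈ A_ρ. Then there exist an invertible matrix T ∈ M_n(ℂ), a transitive map g : ρ → ℂ^× (i.e. g(i,j)g(j,k) = g(i,k) whenever (i,j), (j,k) ∈ ρ), and for each central class C an injective ring homomorphism ω_C : ℂ → ℂ, such that for every X ∈ A_ρ, φ(X) = T M T⁻¹, where M ∈ M_n(ℂ) is the matrix with M_{ij} = g(i,j)·ω_{C(i)}(X_{ij}) for (i,j) ∈ ρ (C(i) denoting the central class containing i) and M_{ij} = 0 for (i,j) ∉ ρ. -/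

import Mathlib

/-- The structural matrix algebra determined by a quasi-order `ρ` on `Fin n`. -/
def structuralMatrixAlgebra {n : ℕ} (ρ : Fin n → Fin n → Prop) :
    Set (Matrix (Fin n) (Fin n) ℂ) :=
  {X | ∀ i j, ¬ ρ i j → X i j = 0}

/-- The equivalence relation `≈` whose classes are the central classes of `A_ρ`:
the reflexive-transitive closure of `i ≈₀ j ⟺ (i,j) ∈ ρ ∨ (j,i) ∈ ρ`. -/
def centralRel {n : ℕ} (ρ : Fin n → Fin n → Prop) : Fin n → Fin n → Prop :=
  Relation.ReflTransGen (fun a b => ρ a b ∨ ρ b a)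

open Matrix

private lemma corner_eq {n : ℕ} (X : Matrix (Fin n) (Fin n) ℂ) (p q : Fin n) :
    Matrix.single p p (1:ℂ) * X * Matrix.single q q 1 = Matrix.single p q (X p q) := by
  ext a b
  by_cases ha : p = a <;> by_cases hb : q = b <;>
    simp [Matrix.mul_apply, Matrix.single, Matrix.of_apply, ha, hb, ite_and,
      Finset.sum_ite_eq, Finset.sum_ite_eq']

private lemma sum_std_diag {n : ℕ} : ∑ i : Fin n, Matrix.single i i (1:ℂ) = 1 := by
  ext a b
  rw [Matrix.sum_apply]
  rcases eq_or_ne a b with rfl | hab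
  · simp [Matrix.single, Matrix.one_apply]
  · simp [Matrix.single, Matrix.one_apply, hab, Finset.filter_eq_empty_iff]

/-- Structure of injective multiplicative maps `φ : A_ρ → M_n(ℂ)` when
every central class has at least 2 elements: there exist an invertible `T`, a
transitive map `g : ρ → ℂ^×`, and injective ring endomorphisms `ω_C` of `ℂ` (one for
each central class) such that `φ(X) = T M T⁻¹` where
`M i j = g i j · ω_{C(i)}(X i j)` for `(i,j) ∈ ρ` and `M i j = 0` otherwise. -/
theorem multiplicative_map_structure {n : ℕ} (ρ : Fin n → Fin n → Prop)
    [DecidableRel ρ]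
    (hrefl : ∀ i, ρ i i) (htrans : ∀ i j k, ρ i j → ρ j k → ρ i k)
    (hclass : ∀ i : Fin n, ∃ j, j ≠ i ∧ centralRel ρ i j)
    (φ : Matrix (Fin n) (Fin n) ℂ → Matrix (Fin n) (Fin n) ℂ)
    (hinj : Set.InjOn φ (structuralMatrixAlgebra ρ))
    (hmul : ∀ X ∈ structuralMatrixAlgebra ρ, ∀ Y ∈ structuralMatrixAlgebra ρ,
      φ (X * Y) = φ X * φ Y) :
    ∃ T : Matrix (Fin n) (Fin n) ℂ, IsUnit T ∧
    ∃ g : Fin n → Fin n → ℂ,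
      (∀ i j, ρ i j → g i j ≠ 0) ∧
      (∀ i j k, ρ i j → ρ j k → g i j * g j k = g i k) ∧
    ∃ ω : Fin n → (ℂ →+* ℂ),
      (∀ i, Function.Injective (ω i)) ∧
      (∀ i j, centralRel ρ i j → ω i = ω j) ∧
      ∀ X ∈ structuralMatrixAlgebra ρ,
        φ X = T * (Matrix.of fun i j =>
          if ρ i j then g i j * ω i (X i j) else 0) * T⁻¹ := by
  -- membership lemmas
  have hA0 : (0 : Matrix (Fin n) (Fin n) ℂ) ∈ structuralMatrixAlgebra ρ :=
    fun i j _ => rfl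
  have hAstd : ∀ {i j : Fin n} (a : ℂ), ρ i j →
      Matrix.single i j a ∈ structuralMatrixAlgebra ρ := by
    intro i j a hij p q hpq
    apply Matrix.single_apply_of_ne
    rintro ⟨rfl, rfl⟩; exact hpq hij
  have hAmul : ∀ {X Y : Matrix (Fin n) (Fin n) ℂ}, X ∈ structuralMatrixAlgebra ρ →
      Y ∈ structuralMatrixAlgebra ρ → X * Y ∈ structuralMatrixAlgebra ρ := by
    intro X Y hX hY p q hpq
    rw [Matrix.mul_apply]
    apply Finset.sum_eq_zero
    intro k _
    by_cases hpk : ρ p k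
    · have : ¬ ρ k q := fun h => hpq (htrans _ _ _ hpk h)
      rw [hY k q this, mul_zero]
    · rw [hX p k hpk, zero_mul]
  have hAadd : ∀ {X Y : Matrix (Fin n) (Fin n) ℂ}, X ∈ structuralMatrixAlgebra ρ →
      Y ∈ structuralMatrixAlgebra ρ → X + Y ∈ structuralMatrixAlgebra ρ := by
    intro X Y hX hY p q hpq
    rw [Matrix.add_apply, hX p q hpq, hY p q hpq, add_zero]
  -- the idempotents
  set z := φ 0 with hz_def
  set P : Fin n → Matrix (Fin n) (Fin n) ℂ := fun i => φ (Matrix.single i i 1) with hP_def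
  have hzl : ∀ X ∈ structuralMatrixAlgebra ρ, z * φ X = z := by
    intro X hX
    rw [hz_def, ← hmul 0 hA0 X hX, zero_mul]
  have hzr : ∀ X ∈ structuralMatrixAlgebra ρ, φ X * z = z := by
    intro X hX
    rw [hz_def, ← hmul X hX 0 hA0, mul_zero]
  have hzz : z * z = z := hzl 0 hA0
  have hPz : ∀ i, P i * z = z := fun i => hzr _ (hAstd 1 (hrefl i))
  have hzP : ∀ i, z * P i = z := fun i => hzl _ (hAstd 1 (hrefl i))
  have hPP : ∀ i j, P i * P j = if i = j then P i else z := by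
    intro i j
    rw [hP_def]
    rcases eq_or_ne i j with rfl | hij
    · rw [if_pos rfl, ← hmul _ (hAstd 1 (hrefl i)) _ (hAstd 1 (hrefl i)),
        Matrix.single_mul_single_same, mul_one]
    · rw [if_neg hij, ← hmul _ (hAstd 1 (hrefl i)) _ (hAstd 1 (hrefl j)),
        Matrix.single_mul_single_of_ne _ _ _ _ hij, hz_def]
  set Q : Fin n → Matrix (Fin n) (Fin n) ℂ := fun i => P i - z with hQ_def
  have hQQ : ∀ i j, Q i * Q j = if i = j then Q i else 0 := by
    intro i j
    rw [hQ_def]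
    simp only [sub_mul, mul_sub]
    rw [hPP, hPz, hzP, hzz]
    rcases eq_or_ne i j with rfl | hij
    · simp
    · simp [if_neg hij]
  have hQne : ∀ i, Q i ≠ 0 := by
    intro i h
    rw [hQ_def] at h
    have hPz' : P i = z := by rwa [sub_eq_zero] at h
    have := hinj (hAstd 1 (hrefl i)) hA0 hPz'
    have h1 := congrFun (congrFun this i) i
    rw [Matrix.single_apply_same, Matrix.zero_apply] at h1
    exact one_ne_zero h1
  -- construct eigenvector basis
  have hxex : ∀ i, ∃ x : Fin n → ℂ, Q i *ᵥ x ≠ 0 := by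
    intro i
    by_contra h
    push_neg at h
    apply hQne i
    ext p q
    have := congrFun (h (Pi.single q 1)) p
    rw [Matrix.mulVec_single] at this
    simpa using this
  choose x hx using hxex
  set v : Fin n → (Fin n → ℂ) := fun i => Q i *ᵥ x i with hv_def
  have hQv : ∀ i m, Q i *ᵥ v m = if i = m then v m else 0 := by
    intro i m
    rw [hv_def]
    simp only [Matrix.mulVec_mulVec, hQQ]
    rcases eq_or_ne i m with rfl | him
    · simp
    · simp [if_neg him, Matrix.zero_mulVec]
  set T : Matrix (Fin n) (Fin n) ℂ := Matrix.of (fun p i => v i p) with hT_def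
  have hTmulVec : ∀ c : Fin n → ℂ, T *ᵥ c = ∑ i, c i • v i := by
    intro c
    ext p
    rw [Matrix.mulVec, dotProduct]
    rw [Finset.sum_apply]
    apply Finset.sum_congr rfl
    intro i _
    simp [hT_def, mul_comm]
  have hdet : IsUnit T.det := by
    rw [isUnit_iff_ne_zero]
    intro hdet0
    obtain ⟨c, hc0, hc⟩ := (Matrix.exists_mulVec_eq_zero_iff).2 hdet0
    apply hc0
    funext j
    have h1 : Q j *ᵥ (T *ᵥ c) = 0 := by rw [hc, Matrix.mulVec_zero]
    rw [hTmulVec] at h1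
    have hlin : Q j *ᵥ (∑ i, c i • v i) = ∑ i, c i • (Q j *ᵥ v i) := by
      simp only [← Matrix.mulVecLin_apply]
      rw [map_sum]
      exact Finset.sum_congr rfl (fun i _ => _root_.map_smul _ _ _)
    have h2 : (∑ i, c i • (Q j *ᵥ v i)) = c j • v j := by
      rw [Finset.sum_eq_single j]
      · rw [hQv, if_pos rfl]
      · intro i _ hij
        rw [hQv, if_neg (fun h => hij h.symm), smul_zero]
      · intro h; exact absurd (Finset.mem_univ j) h
    rw [hlin, h2] at h1
    rcases smul_eq_zero.1 h1 with h | h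
    · exact h
    · exact absurd h (hx j)
  have hT : IsUnit T := (Matrix.isUnit_iff_isUnit_det T).2 hdet
  have hTT : T * T⁻¹ = 1 := Matrix.mul_nonsing_inv T hdet
  have hT'T : T⁻¹ * T = 1 := Matrix.nonsing_inv_mul T hdet
  have hQT : ∀ i, Q i * T = T * Matrix.single i i 1 := by
    intro i
    ext p m
    have hL : (Q i * T) p m = (Q i *ᵥ v m) p := by
      rw [Matrix.mul_apply, Matrix.mulVec, dotProduct]
      exact Finset.sum_congr rfl (fun q _ => rfl)
    rw [hL, hQv]
    rcases eq_or_ne m i with rfl | hmi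
    · rw [if_pos rfl, Matrix.mul_single_apply_same, mul_one]
      rfl
    · rw [if_neg (fun h => hmi h.symm), Matrix.mul_single_apply_of_ne (hbj := hmi)]
      rfl
  have hQeq : ∀ i, Q i = T * Matrix.single i i 1 * T⁻¹ := by
    intro i
    calc Q i = Q i * (T * T⁻¹) := by rw [hTT, mul_one]
    _ = (Q i * T) * T⁻¹ := by rw [Matrix.mul_assoc]
    _ = T * Matrix.single i i 1 * T⁻¹ := by rw [hQT]
  have hQ1 : ∑ i, Q i = 1 := by
    calc ∑ i, Q i = ∑ i, T * Matrix.single i i 1 * T⁻¹ :=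
          Finset.sum_congr rfl (fun i _ => hQeq i)
    _ = (∑ i, T * Matrix.single i i 1) * T⁻¹ := by rw [Finset.sum_mul]
    _ = (T * ∑ i, Matrix.single i i 1) * T⁻¹ := by rw [Finset.mul_sum]
    _ = (T * 1) * T⁻¹ := by rw [sum_std_diag]
    _ = 1 := by rw [mul_one, hTT]
  have hz0 : z = 0 := by
    have hzQ : ∀ i, z * Q i = 0 := by
      intro i
      rw [hQ_def]
      simp only [mul_sub]
      rw [hzP, hzz, sub_self]
    calc z = z * 1 := (mul_one z).symm
    _ = z * ∑ i, Q i := by rw [hQ1]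
    _ = ∑ i, z * Q i := by rw [Finset.mul_sum]
    _ = 0 := by rw [Finset.sum_congr rfl (fun i _ => hzQ i), Finset.sum_const_zero]
  -- the conjugated map
  set ψ : Matrix (Fin n) (Fin n) ℂ → Matrix (Fin n) (Fin n) ℂ :=
    fun X => T⁻¹ * φ X * T with hψ_def
  have hrecov : ∀ M : Matrix (Fin n) (Fin n) ℂ, T * (T⁻¹ * M * T) * T⁻¹ = M := by
    intro M
    calc T * (T⁻¹ * M * T) * T⁻¹ = (T * T⁻¹) * M * (T * T⁻¹) := by
          simp only [Matrix.mul_assoc]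
    _ = M := by rw [hTT, Matrix.one_mul, Matrix.mul_one]
  have hφψ : ∀ X, φ X = T * ψ X * T⁻¹ := fun X => (hrecov (φ X)).symm
  have hψmul : ∀ X ∈ structuralMatrixAlgebra ρ, ∀ Y ∈ structuralMatrixAlgebra ρ,
      ψ (X * Y) = ψ X * ψ Y := by
    intro X hX Y hY
    rw [hψ_def]
    simp only
    rw [hmul X hX Y hY]
    calc T⁻¹ * (φ X * φ Y) * T = T⁻¹ * (φ X * (T * T⁻¹) * φ Y) * T := by
          rw [hTT, Matrix.mul_one]
    _ = (T⁻¹ * φ X * T) * (T⁻¹ * φ Y * T) := by simp only [Matrix.mul_assoc]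
  have hψinj : ∀ X ∈ structuralMatrixAlgebra ρ, ∀ Y ∈ structuralMatrixAlgebra ρ,
      ψ X = ψ Y → X = Y := by
    intro X hX Y hY h
    apply hinj hX hY
    rw [hφψ X, hφψ Y, h]
  have hψ0 : ψ 0 = 0 := by
    rw [hψ_def]
    simp only
    rw [← hz_def, hz0, Matrix.mul_zero, Matrix.zero_mul]
  have hPQ : ∀ i, φ (Matrix.single i i 1) = Q i := by
    intro i
    rw [hQ_def]
    show P i = P i - z
    rw [hz0, sub_zero]
  have hψE : ∀ i, ψ (Matrix.single i i 1) = Matrix.single i i 1 := by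
    intro i
    rw [hψ_def]
    simp only
    rw [hPQ, Matrix.mul_assoc, hQT i, ← Matrix.mul_assoc, hT'T, Matrix.one_mul]
  -- the entry functions
  set f : Fin n → Fin n → ℂ → ℂ := fun p q a => ψ (Matrix.single p q a) p q with hf_def
  have master : ∀ X ∈ structuralMatrixAlgebra ρ, ∀ p q, ψ X p q = f p q (X p q) := by
    intro X hX p q
    have h1 : Matrix.single p p (1:ℂ) * X * Matrix.single q q 1 =
        Matrix.single p q (X p q) := corner_eq X p q
    have h2 : ψ (Matrix.single p q (X p q)) =
        Matrix.single p p 1 * ψ X * Matrix.single q q 1 := by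
      rw [← h1, Matrix.mul_assoc,
        hψmul _ (hAstd 1 (hrefl p)) _ (hAmul hX (hAstd 1 (hrefl q))),
        hψmul _ hX _ (hAstd 1 (hrefl q)), hψE, hψE, ← Matrix.mul_assoc]
    have h3 := congrFun (congrFun h2 p) q
    rw [corner_eq (ψ X) p q, Matrix.single_apply_same] at h3
    exact h3.symm
  have hf0 : ∀ p q, f p q 0 = 0 := by
    intro p q
    rw [hf_def]
    simp only
    rw [Matrix.single_zero, hψ0, Matrix.zero_apply]
  have hstd : ∀ {p q : Fin n} (a : ℂ), ρ p q →
      ψ (Matrix.single p q a) = Matrix.single p q (f p q a) := by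
    intro p q a hpq
    ext c d
    rw [master _ (hAstd a hpq) c d]
    by_cases h : p = c ∧ q = d
    · obtain ⟨rfl, rfl⟩ := h
      rw [Matrix.single_apply_same, Matrix.single_apply_same]
    · rw [Matrix.single_apply_of_ne _ _ _ _ _ h,
        Matrix.single_apply_of_ne _ _ _ _ _ h, hf0]
  have hfmul : ∀ {i j k : Fin n}, ρ i j → ρ j k → ∀ a b : ℂ,
      f i j a * f j k b = f i k (a * b) := by
    intro i j k hij hjk a b
    have h1 : ψ (Matrix.single i j a * Matrix.single j k b) =
        ψ (Matrix.single i j a) * ψ (Matrix.single j k b) :=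
      hψmul _ (hAstd a hij) _ (hAstd b hjk)
    rw [Matrix.single_mul_single_same, hstd _ (htrans _ _ _ hij hjk), hstd _ hij,
      hstd _ hjk, Matrix.single_mul_single_same] at h1
    have h2 := congrFun (congrFun h1 i) k
    rw [Matrix.single_apply_same, Matrix.single_apply_same] at h2
    exact h2.symm
  have hfone : ∀ i, f i i 1 = 1 := by
    intro i
    rw [hf_def]
    simp only
    rw [hψE, Matrix.single_apply_same]
  set g : Fin n → Fin n → ℂ := fun i j => f i j 1 with hg_def
  have hgne : ∀ {i j : Fin n}, ρ i j → g i j ≠ 0 := by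
    intro i j hij h0
    have h1 : ψ (Matrix.single i j 1) = ψ 0 := by
      rw [hstd 1 hij, hψ0]
      rw [hg_def] at h0
      simp only at h0
      rw [h0, Matrix.single_zero]
    have h2 := hψinj _ (hAstd 1 hij) _ hA0 h1
    have h3 := congrFun (congrFun h2 i) j
    rw [Matrix.single_apply_same, Matrix.zero_apply] at h3
    exact one_ne_zero h3
  have hfact_r : ∀ {i j : Fin n}, ρ i j → ∀ a : ℂ, f i j a = f i i a * g i j := by
    intro i j hij a
    rw [hg_def]
    simp only
    rw [hfmul (hrefl i) hij a 1, mul_one]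
  have hfact_l : ∀ {i j : Fin n}, ρ i j → ∀ a : ℂ, f i j a = g i j * f j j a := by
    intro i j hij a
    rw [hg_def]
    simp only
    rw [hfmul hij (hrefl j) 1 a, one_mul]
  have hconst : ∀ {i j : Fin n}, ρ i j → f i i = f j j := by
    intro i j hij
    funext a
    have h1 : f i i a * g i j = g i j * f j j a := by
      rw [← hfact_r hij, ← hfact_l hij]
    rw [mul_comm (g i j)] at h1
    exact mul_right_cancel₀ (hgne hij) h1
  -- additivity of f along edges
  have hadd_edge : ∀ {k l : Fin n}, ρ k l → k ≠ l → ∀ a b : ℂ,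
      f k l (a + b) = f k l a + f k l b := by
    intro k l hkl hne a b
    set X := Matrix.single k k (1:ℂ) + Matrix.single k l a with hX_def
    set Y := Matrix.single k l b + Matrix.single l l (1:ℂ) with hY_def
    have hXmem : X ∈ structuralMatrixAlgebra ρ := hAadd (hAstd 1 (hrefl k)) (hAstd a hkl)
    have hYmem : Y ∈ structuralMatrixAlgebra ρ := hAadd (hAstd b hkl) (hAstd 1 (hrefl l))
    have hXY : X * Y = Matrix.single k l (a + b) := by
      rw [hX_def, hY_def, add_mul, mul_add, mul_add,
        Matrix.single_mul_single_same, Matrix.single_mul_single_same,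
        Matrix.single_mul_single_of_ne _ _ _ _ hne,
        Matrix.single_mul_single_of_ne _ _ _ _ (Ne.symm hne)]
      rw [one_mul, mul_one, add_zero, zero_add, ← Matrix.single_add, add_comm b a]
    have hXkk : X k k = 1 := by
      rw [hX_def, Matrix.add_apply, Matrix.single_apply_same,
        Matrix.single_apply_of_ne _ _ _ _ _ (fun h => hne h.2.symm), add_zero]
    have hXkl : X k l = a := by
      rw [hX_def, Matrix.add_apply, Matrix.single_apply_same,
        Matrix.single_apply_of_ne _ _ _ _ _ (fun h => hne h.2), zero_add]
    have hYkl : Y k l = b := by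
      rw [hY_def, Matrix.add_apply, Matrix.single_apply_same,
        Matrix.single_apply_of_ne _ _ _ _ _ (fun h => hne h.1.symm), add_zero]
    have hYll : Y l l = 1 := by
      rw [hY_def, Matrix.add_apply, Matrix.single_apply_same,
        Matrix.single_apply_of_ne _ _ _ _ _ (fun h => hne h.1), zero_add]
    have h1 : ψ (X * Y) = ψ X * ψ Y := hψmul _ hXmem _ hYmem
    have h2 : ψ (X * Y) k l = f k l (a + b) := by
      rw [master _ (hAmul hXmem hYmem) k l, hXY, Matrix.single_apply_same]
    have h3 : (ψ X * ψ Y) k l = f k l b + f k l a := by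
      rw [Matrix.mul_apply]
      have hzero : ∀ m ∈ Finset.univ, m ∉ ({k, l} : Finset (Fin n)) →
          ψ X k m * ψ Y m l = 0 := by
        intro m _ hm
        simp only [Finset.mem_insert, Finset.mem_singleton, not_or] at hm
        obtain ⟨hmk, hml⟩ := hm
        have hXkm : X k m = 0 := by
          rw [hX_def, Matrix.add_apply,
            Matrix.single_apply_of_ne _ _ _ _ _ (fun h => hmk h.2.symm),
            Matrix.single_apply_of_ne _ _ _ _ _ (fun h => hml h.2.symm), add_zero]
        rw [master X hXmem k m, hXkm, hf0, zero_mul]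
      rw [← Finset.sum_subset (Finset.subset_univ ({k, l} : Finset (Fin n))) hzero,
        Finset.sum_pair hne, master X hXmem k k, master X hXmem k l,
        master Y hYmem k l, master Y hYmem l l, hXkk, hXkl, hYkl, hYll,
        hfone, hfone, one_mul, mul_one]
    rw [← h2, h1, h3, add_comm]
  have hadd_diag : ∀ {k l : Fin n}, ρ k l → k ≠ l →
      (∀ a b : ℂ, f k k (a + b) = f k k a + f k k b) ∧
      (∀ a b : ℂ, f l l (a + b) = f l l a + f l l b) := by
    intro k l hkl hne
    constructor
    · intro a b
      apply mul_right_cancel₀ (hgne hkl)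
      rw [← hfact_r hkl, hadd_edge hkl hne, add_mul, ← hfact_r hkl, ← hfact_r hkl]
    · intro a b
      apply mul_left_cancel₀ (hgne hkl)
      rw [← hfact_l hkl, hadd_edge hkl hne, mul_add, ← hfact_l hkl, ← hfact_l hkl]
  have key : ∀ q p : Fin n, Relation.ReflTransGen (fun a b : Fin n => ρ a b ∨ ρ b a) p q →
      p ≠ q → ∀ a b : ℂ, f p p (a + b) = f p p a + f p p b := by
    intro q p h
    induction h using Relation.ReflTransGen.head_induction_on with
    | refl => exact fun h => absurd rfl h
    | @head p c hstep htail ih =>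
      intro hpq a b
      rcases eq_or_ne p c with rfl | hpc
      · exact ih hpq a b
      · rcases hstep with h | h
        · exact (hadd_diag h hpc).1 a b
        · exact (hadd_diag h (Ne.symm hpc)).2 a b
  have hAddAll : ∀ i : Fin n, ∀ a b : ℂ, f i i (a + b) = f i i a + f i i b := by
    intro i
    obtain ⟨j, hj, hR⟩ := hclass i
    exact key j i hR (Ne.symm hj)
  have hconstChain : ∀ i j : Fin n, centralRel ρ i j → f i i = f j j := by
    intro i j h
    induction h with
    | refl => rfl
    | tail hab hbc ih =>
      rcases hbc with h | h
      · exact ih.trans (hconst h)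
      · exact ih.trans (hconst h).symm
  -- assemble the answer
  refine ⟨T, hT, g, fun i j hij => hgne hij, ?_, ?_⟩
  · intro i j k hij hjk
    have := hfmul hij hjk 1 1
    rw [one_mul] at this
    exact this
  · refine ⟨fun i =>
      { toFun := f i i
        map_one' := hfone i
        map_mul' := fun a b => (hfmul (hrefl i) (hrefl i) a b).symm
        map_zero' := hf0 i i
        map_add' := hAddAll i }, ?_, ?_, ?_⟩
    · intro i a b hab
      simp only [RingHom.coe_mk, MonoidHom.coe_mk, OneHom.coe_mk] at hab
      have h1 : ψ (Matrix.single i i a) = ψ (Matrix.single i i b) := by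
        rw [hstd a (hrefl i), hstd b (hrefl i), hab]
      have h2 := hψinj _ (hAstd a (hrefl i)) _ (hAstd b (hrefl i)) h1
      have h3 := congrFun (congrFun h2 i) i
      rwa [Matrix.single_apply_same, Matrix.single_apply_same] at h3
    · intro i j h
      apply RingHom.ext
      intro x
      show f i i x = f j j x
      rw [hconstChain i j h]
    · intro X hX
      have hM : ψ X = Matrix.of (fun i j => if ρ i j then g i j * f i i (X i j) else 0) := by
        ext i j
        rw [master X hX i j, Matrix.of_apply]
        by_cases h : ρ i j
        · rw [if_pos h, hfact_r h, mul_comm]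
        · rw [if_neg h, hX i j h, hf0]
      rw [hφψ X, hM]
      rfl
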